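/- Let F_q be a finite field of characteristic p ≥ 5. The standard basis of ℂ^q together with the q bases B_α = {q^{-1/2}(ω_p^{tr((k+α)³ + λ(k+α))})_{k ∈ F_q} : λ ∈ F_q}, α ∈ F_q, form a set of q + 1 pairwise mutually unbiased orthonormal bases of ℂ^q. -/

import Mathlib

open scoped InnerProductSpace
open Complex Finset

set_option linter.unusedSectionVars false

/-- The Alltop vector `b_{λ,α} = q^{-1/2} (ω_p^{tr((k+α)³ + λ(k+α))})_{k ∈ F_q}`,
where `ω_p = exp(2πi/p)` and `tr` is the absolute trace from `F_q` to `F_p`. -/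
noncomputable def alltop (p : ℕ) (F : Type) [Field F] [Fintype F] [Algebra (ZMod p) F]
    (lam alpha : F) : EuclideanSpace ℂ F :=
  WithLp.toLp 2 (fun k => (1 / Real.sqrt (Fintype.card F) : ℂ) *
    Complex.exp (2 * Real.pi * Complex.I *
      (ZMod.val (Algebra.trace (ZMod p) F ((k + alpha) ^ 3 + lam * (k + alpha))) : ℂ) / p))

/-- The family consisting of the standard basis (index `none`) and the Alltop
bases `B_α` for `α ∈ F_q` (index `some α`). -/
noncomputable def Wa (p : ℕ) (F : Type) [Field F] [Fintype F] [DecidableEq F]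
    [Algebra (ZMod p) F] : Option F → F → EuclideanSpace ℂ F
  | none => fun y => EuclideanSpace.single y (1 : ℂ)
  | some alpha => fun lam => alltop p F lam alpha


namespace AlltopAux

noncomputable def zet (p : ℕ) : ℂ := Complex.exp (2 * Real.pi * Complex.I / p)

variable (p : ℕ) [Fact p.Prime] (F : Type) [Field F] [Fintype F] [Algebra (ZMod p) F]

lemma pp : 0 < p := (Fact.out : p.Prime).pos

lemma hzet : IsPrimitiveRoot (zet p) p := Complex.isPrimitiveRoot_exp p (pp p).ne'

lemma zet_pow_mod (n : ℕ) : zet p ^ (n % p) = zet p ^ n := by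
  conv_rhs => rw [← Nat.mod_add_div n p, pow_add, pow_mul, (hzet p).pow_eq_one, one_pow, mul_one]

noncomputable def e (x : F) : ℂ := zet p ^ (ZMod.val (Algebra.trace (ZMod p) F x))

lemma e_def (x : F) : e p F x = Complex.exp (2 * Real.pi * Complex.I *
    (ZMod.val (Algebra.trace (ZMod p) F x) : ℂ) / p) := by
  rw [e, zet, ← Complex.exp_nat_mul]
  congr 1
  ring

lemma e_zero : e p F 0 = 1 := by simp [e]

lemma e_add (x y : F) : e p F (x + y) = e p F x * e p F y := by
  haveI : NeZero p := ⟨(pp p).ne'⟩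
  rw [e, e, e, map_add, ZMod.val_add, zet_pow_mod, pow_add]

lemma e_neg (x : F) : e p F (-x) = (e p F x)⁻¹ := by
  have h : e p F x * e p F (-x) = 1 := by
    rw [← e_add, add_neg_cancel, e_zero]
  exact (inv_eq_of_mul_eq_one_right h).symm

lemma abs_e (x : F) : ‖e p F x‖ = 1 := by
  rw [e, norm_pow]
  rw [show ‖zet p‖ = 1 from Complex.norm_eq_one_of_pow_eq_one (hzet p).pow_eq_one (pp p).ne']
  exact one_pow _

lemma conj_e (x : F) : (starRingEnd ℂ) (e p F x) = e p F (-x) := by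
  rw [e_neg, ← Complex.inv_eq_conj (abs_e p F x)]

lemma exists_ne_one : ∃ x : F, e p F x ≠ 1 := by
  haveI : Fact (1 < p) := ⟨(Fact.out : p.Prime).one_lt⟩
  obtain ⟨x, hx⟩ := Algebra.trace_surjective (ZMod p) F 1
  refine ⟨x, ?_⟩
  rw [e, hx, ZMod.val_one, pow_one]
  exact (hzet p).ne_one (Fact.out : 1 < p)

lemma sum_e : ∑ x : F, e p F x = 0 := by
  obtain ⟨x₀, h⟩ := exists_ne_one p F
  have key : e p F x₀ * ∑ x : F, e p F x = ∑ x : F, e p F x := by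
    rw [Finset.mul_sum]
    simp_rw [← e_add]
    exact Fintype.sum_equiv (Equiv.addLeft x₀) _ _ (fun x => rfl)
  have h2 : (e p F x₀ - 1) * ∑ x : F, e p F x = 0 := by
    rw [sub_mul, one_mul, key, sub_self]
  rcases mul_eq_zero.mp h2 with h3 | h3
  · exact absurd (sub_eq_zero.mp h3) h
  · exact h3

lemma sum_e_mul {c : F} (hc : c ≠ 0) : ∑ x : F, e p F (c * x) = 0 := by
  exact (Fintype.sum_equiv (Equiv.mulLeft₀ c hc) (fun x => e p F (c * x)) (e p F)
    (fun x => rfl)).trans (sum_e p F)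

lemma sum_e_affine {c : F} (d : F) (hc : c ≠ 0) : ∑ x : F, e p F (c * (x + d)) = 0 := by
  exact (Fintype.sum_equiv (Equiv.addRight d) (fun x => e p F (c * (x + d)))
    (fun x => e p F (c * x)) (fun x => rfl)).trans (sum_e_mul p F hc)

lemma key_quad {a : F} (b c : F) (ha : a ≠ 0) (h2 : (2 : F) ≠ 0) :
    (∑ x : F, e p F (a * x ^ 2 + b * x + c)) *
      (starRingEnd ℂ) (∑ x : F, e p F (a * x ^ 2 + b * x + c)) = (Fintype.card F : ℂ) := by
  rw [map_sum]
  simp_rw [conj_e]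
  rw [Finset.sum_mul_sum]
  have step : ∀ x y : F, e p F (a * x ^ 2 + b * x + c) * e p F (-(a * y ^ 2 + b * y + c)) =
      e p F ((a * x ^ 2 + b * x) - (a * y ^ 2 + b * y)) := by
    intro x y
    rw [← e_add]
    congr 1
    ring
  simp_rw [step]
  rw [Finset.sum_comm]
  have step2 : ∀ y : F, (∑ x : F, e p F ((a * x ^ 2 + b * x) - (a * y ^ 2 + b * y))) =
      ∑ t : F, e p F (a * t ^ 2 + b * t) * e p F ((2 * a * t) * y) := by
    intro y
    refine (Fintype.sum_equiv (Equiv.addRight y)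
      (fun t => e p F (a * t ^ 2 + b * t) * e p F ((2 * a * t) * y)) _ (fun t => ?_)).symm
    simp only [Equiv.coe_addRight]
    rw [← e_add]
    congr 1
    ring
  simp_rw [step2]
  rw [Finset.sum_comm]
  simp_rw [← Finset.mul_sum]
  rw [Fintype.sum_eq_single (0 : F) (fun t ht => by
    rw [sum_e_mul p F (mul_ne_zero (mul_ne_zero h2 ha) ht), mul_zero])]
  simp [e_zero, Finset.card_univ]

end AlltopAux

open AlltopAux

lemma alltop_eq (p : ℕ) [Fact p.Prime] (F : Type) [Field F] [Fintype F] [Algebra (ZMod p) F]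
    (lam alpha k : F) : alltop p F lam alpha k =
      (1 / Real.sqrt (Fintype.card F) : ℂ) * e p F ((k + alpha) ^ 3 + lam * (k + alpha)) := by
  rw [e_def]
  rfl

section Main

variable (p : ℕ) [Fact p.Prime] (F : Type) [Field F] [Fintype F] [Algebra (ZMod p) F]

lemma cardF_pos : 0 < Fintype.card F := Fintype.card_pos

lemma sqrt_term : ((starRingEnd ℂ) (1 / Real.sqrt (Fintype.card F) : ℂ)) *
    (1 / Real.sqrt (Fintype.card F) : ℂ) = 1 / (Fintype.card F : ℂ) := by
  have hq : (0:ℝ) ≤ (Fintype.card F : ℝ) := Nat.cast_nonneg _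
  rw [map_div₀, map_one, Complex.conj_ofReal, div_mul_div_comm, one_mul,
    ← Complex.ofReal_mul, Real.mul_self_sqrt hq]
  norm_num

lemma inner_alltop (lam alpha lam' alpha' : F) :
    ⟪alltop p F lam alpha, alltop p F lam' alpha'⟫_ℂ = (1 / (Fintype.card F) : ℂ) *
      ∑ k : F, e p F (((k + alpha') ^ 3 + lam' * (k + alpha'))
        - ((k + alpha) ^ 3 + lam * (k + alpha))) := by
  simp only [PiLp.inner_apply, RCLike.inner_apply, alltop_eq, map_mul]
  rw [Finset.mul_sum]
  refine Finset.sum_congr rfl (fun k _ => ?_)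
  rw [conj_e]
  rw [show (1 / Real.sqrt (Fintype.card F) : ℂ) * e p F ((k + alpha') ^ 3 + lam' * (k + alpha')) *
      (((starRingEnd ℂ) (1 / Real.sqrt (Fintype.card F) : ℂ)) *
      e p F (-((k + alpha) ^ 3 + lam * (k + alpha)))) =
      (((starRingEnd ℂ) (1 / Real.sqrt (Fintype.card F) : ℂ)) *
        (1 / Real.sqrt (Fintype.card F) : ℂ)) *
        (e p F ((k + alpha') ^ 3 + lam' * (k + alpha')) *
          e p F (-((k + alpha) ^ 3 + lam * (k + alpha)))) by ring]
  rw [sqrt_term, ← e_add]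
  congr 2
  ring

lemma orth (alpha : F) : Orthonormal ℂ (fun lam => alltop p F lam alpha) := by
  classical
  rw [orthonormal_iff_ite]
  intro lam lam'
  by_cases h : lam = lam'
  · subst h
    rw [if_pos rfl, inner_alltop]
    simp_rw [sub_self, e_zero]
    rw [Finset.sum_const, Finset.card_univ, nsmul_eq_mul, mul_one]
    have : (Fintype.card F : ℂ) ≠ 0 := Nat.cast_ne_zero.mpr (cardF_pos F).ne'
    field_simp
  · rw [if_neg h, inner_alltop]
    have harg : ∀ k : F, ((k + alpha) ^ 3 + lam' * (k + alpha))
        - ((k + alpha) ^ 3 + lam * (k + alpha)) = (lam' - lam) * (k + alpha) := fun k => by ring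
    simp_rw [harg]
    rw [sum_e_affine p F alpha (sub_ne_zero.mpr (Ne.symm h)), mul_zero]

end Main

/-- For `F_q` of characteristic `p ≥ 5`, the standard basis of `ℂ^q` together
with the `q` Alltop bases `B_α`, `α ∈ F_q`, form a set of `q + 1` pairwise
mutually unbiased orthonormal bases of `ℂ^q`. -/
theorem alltop_q_add_one_mubs (p : ℕ) [Fact p.Prime] (hp : 5 ≤ p)
    (F : Type) [Field F] [Fintype F] [DecidableEq F] [Algebra (ZMod p) F] :
    Fintype.card (Option F) = Fintype.card F + 1 ∧
    (∀ o : Option F,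
      ∃ B : OrthonormalBasis F ℂ (EuclideanSpace ℂ F), ∀ b : F, B b = Wa p F o b) ∧
    (∀ o o' : Option F, o ≠ o' → ∀ b b' : F,
      ‖⟪Wa p F o b, Wa p F o' b'⟫_ℂ‖ ^ 2 = 1 / Fintype.card F) := by
  haveI : CharP F p := charP_of_injective_algebraMap (algebraMap (ZMod p) F).injective p
  have h2 : (2 : F) ≠ 0 := by
    intro h
    have := Nat.le_of_dvd two_pos ((CharP.cast_eq_zero_iff F p 2).mp h)
    omega
  have h3 : (3 : F) ≠ 0 := by
    intro h
    have := Nat.le_of_dvd three_pos ((CharP.cast_eq_zero_iff F p 3).mp h)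
    omega
  have hq0 : (0:ℝ) < (Fintype.card F : ℝ) := by exact_mod_cast cardF_pos F
  -- magnitude of alltop entries
  have habs_entry : ∀ lam alpha k : F, ‖alltop p F lam alpha k‖ ^ 2
      = 1 / (Fintype.card F : ℝ) := by
    intro lam alpha k
    rw [alltop_eq, norm_mul, abs_e, mul_one, norm_div, norm_one, Complex.norm_real,
      Real.norm_of_nonneg (Real.sqrt_nonneg _), div_pow, one_pow, Real.sq_sqrt hq0.le]
  refine ⟨Fintype.card_option, ?_, ?_⟩
  · rintro (_ | alpha)
    · exact ⟨EuclideanSpace.basisFun F ℂ, fun b => by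
        simp [Wa, EuclideanSpace.basisFun_apply]⟩
    · have hon := orth p F alpha
      have hsp : ⊤ ≤ Submodule.span ℂ (Set.range fun lam => alltop p F lam alpha) :=
        (hon.linearIndependent.span_eq_top_of_card_eq_finrank
          (by simp [finrank_euclideanSpace])).ge
      exact ⟨OrthonormalBasis.mk hon hsp, fun b => by
        rw [OrthonormalBasis.coe_mk]; rfl⟩
  · rintro (_ | alpha) (_ | alpha') ho b b'
    · exact absurd rfl ho
    · -- standard vs alltop
      rw [show (Wa p F none b : EuclideanSpace ℂ F) = EuclideanSpace.single b (1:ℂ) from rfl,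
        EuclideanSpace.inner_single_left, map_one, one_mul]
      exact habs_entry b' alpha' b
    · rw [show (Wa p F none b' : EuclideanSpace ℂ F) = EuclideanSpace.single b' (1:ℂ) from rfl,
        EuclideanSpace.inner_single_right, one_mul, Complex.norm_conj]
      exact habs_entry b alpha b'
    · -- two alltop bases
      have halpha : alpha ≠ alpha' := fun h => ho (by rw [h])
      have ha : (3 : F) * (alpha' - alpha) ≠ 0 :=
        mul_ne_zero h3 (sub_ne_zero.mpr (Ne.symm halpha))
      rw [show Wa p F (some alpha) b = alltop p F b alpha from rfl,
        show Wa p F (some alpha') b' = alltop p F b' alpha' from rfl,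
        inner_alltop]
      have harg : ∀ k : F, ((k + alpha') ^ 3 + b' * (k + alpha'))
          - ((k + alpha) ^ 3 + b * (k + alpha))
          = (3 * (alpha' - alpha)) * k ^ 2 + (3 * alpha' ^ 2 - 3 * alpha ^ 2 + b' - b) * k
            + (alpha' ^ 3 - alpha ^ 3 + b' * alpha' - b * alpha) := fun k => by ring
      simp_rw [harg]
      set T : ℂ := ∑ k : F, e p F ((3 * (alpha' - alpha)) * k ^ 2
        + (3 * alpha' ^ 2 - 3 * alpha ^ 2 + b' - b) * k
        + (alpha' ^ 3 - alpha ^ 3 + b' * alpha' - b * alpha)) with hT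
      have hTT : T * (starRingEnd ℂ) T = (Fintype.card F : ℂ) := by
        rw [hT]
        exact key_quad p F _ _ ha h2
      have hnormT : ‖T‖ ^ 2 = (Fintype.card F : ℝ) := by
        rw [Complex.sq_norm]
        have h' : (Complex.normSq T : ℂ) = (Fintype.card F : ℂ) := by
          rw [← Complex.mul_conj, hTT]
        exact_mod_cast h'
      rw [norm_mul, mul_pow, hnormT, norm_div, norm_one, Complex.norm_natCast, div_pow, one_pow]
      have hq0' : (Fintype.card F : ℝ) ≠ 0 := hq0.ne'
      field_simp
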